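/- For every integer t ≥ 3 and every ε > 0, there exists a constant C₁ = C₁(t, ε) such that the following holds. Let the edges of the complete graph G = K_n be two-coloured red and blue so that the number of blue edges is at least the number of red edges, and suppose the colouring contains no unavoidable t-colouring. Then there is a set S ⊆ V(G) of at most C₁ vertices such that in the induced two-coloured complete graph G' = G[V(G) \ S] on n' vertices, every vertex is incident to at least (1 − 2ε)n' blue edges. -/

import Mathlib

/-- A two-coloured complete graph (red graph `R`, blue graph `Rᶜ`) contains an
unavoidable `t`-colouring: there are disjoint `t`-sets `X`, `Y` such that one of
the colours `G ∈ {R, Rᶜ}` forms either the clique on `X` alone, or the two disjoint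
cliques on `X` and on `Y`, with all remaining edges among `X ∪ Y` of the other colour. -/
def ContainsUnavoidable {V : Type*} (R : SimpleGraph V) (t : ℕ) : Prop :=
  ∃ X Y : Finset V, Disjoint X Y ∧ X.card = t ∧ Y.card = t ∧
    ∃ G : SimpleGraph V, (G = R ∨ G = Rᶜ) ∧
      G.IsClique (X : Set V) ∧
      (G.IsClique (Y : Set V) ∨ Gᶜ.IsClique (Y : Set V)) ∧
      ∀ x ∈ X, ∀ y ∈ Y, Gᶜ.Adj x y

open Finset

attribute [local instance] Classical.propDecidable

namespace Stmt8

/-! ### Fixed notation for neighbourhood sets (avoids decidability-instance mismatches) -/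

/-- the set of `G`-neighbours of `b` inside `A` -/
noncomputable def adjIn {n : ℕ} (G : SimpleGraph (Fin n)) (A : Finset (Fin n)) (b : Fin n) :
    Finset (Fin n) := A.filter (fun a => G.Adj b a)

/-- the set of common `G`-neighbours (in `B`) of all of `S` -/
noncomputable def comN {n : ℕ} (G : SimpleGraph (Fin n)) (B S : Finset (Fin n)) :
    Finset (Fin n) := B.filter (fun b => ∀ a ∈ S, G.Adj b a)

lemma mem_adjIn {n : ℕ} {G : SimpleGraph (Fin n)} {A : Finset (Fin n)} {b u : Fin n} :
    u ∈ adjIn G A b ↔ u ∈ A ∧ G.Adj b u := by unfold adjIn; exact mem_filter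

lemma mem_comN {n : ℕ} {G : SimpleGraph (Fin n)} {B S : Finset (Fin n)} {b : Fin n} :
    b ∈ comN G B S ↔ b ∈ B ∧ ∀ a ∈ S, G.Adj b a := by unfold comN; exact mem_filter

lemma adjIn_subset {n : ℕ} (G : SimpleGraph (Fin n)) (A : Finset (Fin n)) (b : Fin n) :
    adjIn G A b ⊆ A := by unfold adjIn; exact filter_subset _ _

lemma comN_subset {n : ℕ} (G : SimpleGraph (Fin n)) (B S : Finset (Fin n)) :
    comN G B S ⊆ B := by unfold comN; exact filter_subset _ _

lemma adjIn_mono {n : ℕ} (G : SimpleGraph (Fin n)) {A A' : Finset (Fin n)} (h : A ⊆ A')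
    (b : Fin n) : adjIn G A b ⊆ adjIn G A' b := by
  unfold adjIn; exact filter_subset_filter _ h

/-! ### Ramsey's theorem -/

def RamPair (a b N : ℕ) : Prop :=
  ∀ (n : ℕ) (G : SimpleGraph (Fin n)) (A : Finset (Fin n)), N ≤ A.card →
    (∃ S, S ⊆ A ∧ S.card = a ∧ G.IsClique (S : Set (Fin n))) ∨
    (∃ S, S ⊆ A ∧ S.card = b ∧ Gᶜ.IsClique (S : Set (Fin n)))

theorem ramsey_pair : ∀ c a b : ℕ, a + b ≤ c → ∃ N, RamPair a b N := by
  intro c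
  induction c with
  | zero =>
    intro a b hab
    refine ⟨0, fun n G A _ => Or.inl ⟨∅, empty_subset _, ?_, by simp⟩⟩
    simp; omega
  | succ c ih =>
    intro a b hab
    match a, b with
    | 0, b => exact ⟨0, fun n G A _ => Or.inl ⟨∅, empty_subset _, by simp, by simp⟩⟩
    | a + 1, 0 => exact ⟨0, fun n G A _ => Or.inr ⟨∅, empty_subset _, by simp, by simp⟩⟩
    | a + 1, b + 1 =>
      obtain ⟨N₁, h₁⟩ := ih a (b + 1) (by omega)
      obtain ⟨N₂, h₂⟩ := ih (a + 1) b (by omega)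
      refine ⟨N₁ + N₂ + 1, fun n G A hA => ?_⟩
      obtain ⟨v, hv⟩ : A.Nonempty := card_pos.1 (by omega)
      set P := (A.erase v).filter (fun u => G.Adj v u) with hP
      set Q := (A.erase v).filter (fun u => ¬ G.Adj v u) with hQ
      have hPQ : P.card + Q.card = A.card - 1 := by
        rw [hP, hQ, card_filter_add_card_filter_not, card_erase_of_mem hv]
      have hcases : N₁ ≤ P.card ∨ N₂ ≤ Q.card := by omega
      rcases hcases with hc | hc
      · rcases h₁ n G P hc with ⟨S, hS, hScard, hclique⟩ | ⟨S, hS, hScard, hclique⟩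
        · left
          have hvS : v ∉ S := fun hmem => (mem_erase.1 (mem_of_mem_filter _ (hS hmem))).1 rfl
          refine ⟨insert v S, ?_, ?_, ?_⟩
          · intro x hx
            rcases mem_insert.1 hx with rfl | hx
            · exact hv
            · exact mem_of_mem_erase (mem_of_mem_filter _ (hS hx))
          · rw [card_insert_of_notMem hvS, hScard]
          · rw [coe_insert]
            exact hclique.insert (fun u hu _ => (mem_filter.1 (hS hu)).2)
        · right
          exact ⟨S, fun x hx => mem_of_mem_erase (mem_of_mem_filter _ (hS hx)), hScard, hclique⟩
      · rcases h₂ n G Q hc with ⟨S, hS, hScard, hclique⟩ | ⟨S, hS, hScard, hclique⟩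
        · left
          exact ⟨S, fun x hx => mem_of_mem_erase (mem_of_mem_filter _ (hS hx)), hScard, hclique⟩
        · right
          have hvS : v ∉ S := fun hmem => (mem_erase.1 (mem_of_mem_filter _ (hS hmem))).1 rfl
          refine ⟨insert v S, ?_, ?_, ?_⟩
          · intro x hx
            rcases mem_insert.1 hx with rfl | hx
            · exact hv
            · exact mem_of_mem_erase (mem_of_mem_filter _ (hS hx))
          · rw [card_insert_of_notMem hvS, hScard]
          · rw [coe_insert]
            refine hclique.insert (fun u hu hne => ?_)
            have hu' := mem_filter.1 (hS hu)
            exact G.compl_adj v u |>.2 ⟨hne, hu'.2⟩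

def RamseyProp (k N : ℕ) : Prop :=
  ∀ (n : ℕ) (G : SimpleGraph (Fin n)) (A : Finset (Fin n)), N ≤ A.card →
    ∃ S, S ⊆ A ∧ S.card = k ∧
      (G.IsClique (S : Set (Fin n)) ∨ Gᶜ.IsClique (S : Set (Fin n)))

theorem ramsey_exists (k : ℕ) : ∃ N, k ≤ N ∧ RamseyProp k N := by
  obtain ⟨N, hN⟩ := ramsey_pair (k + k) k k le_rfl
  refine ⟨max N k, le_max_right _ _, fun n G A hA => ?_⟩
  rcases hN n G A (le_trans (le_max_left _ _) hA) with ⟨S, h1, h2, h3⟩ | ⟨S, h1, h2, h3⟩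
  · exact ⟨S, h1, h2, Or.inl h3⟩
  · exact ⟨S, h1, h2, Or.inr h3⟩

/-! ### The counting core -/

variable {n : ℕ}

lemma sum_choose_eq (G : SimpleGraph (Fin n)) (A B : Finset (Fin n)) (m : ℕ) :
    ∑ b ∈ B, ((A.filter (fun a => G.Adj b a)).card.choose m)
      = ∑ S ∈ A.powersetCard m, (B.filter (fun b => ∀ a ∈ S, G.Adj b a)).card := by
  have key : ∀ b, (A.filter (fun a => G.Adj b a)).card.choose m
      = ((A.powersetCard m).filter (fun S => ∀ a ∈ S, G.Adj b a)).card := by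
    intro b
    rw [← card_powersetCard m (A.filter (fun a => G.Adj b a))]
    congr 1
    ext S
    simp only [mem_powersetCard, mem_filter, subset_iff, mem_filter]
    constructor
    · rintro ⟨hsub, hcard⟩
      exact ⟨⟨fun x hx => (hsub hx).1, hcard⟩, fun a ha => (hsub ha).2⟩
    · rintro ⟨⟨hsub, hcard⟩, hadj⟩
      exact ⟨fun x hx => ⟨hsub hx, hadj x hx⟩, hcard⟩
  calc ∑ b ∈ B, ((A.filter (fun a => G.Adj b a)).card.choose m)
      = ∑ b ∈ B, ((A.powersetCard m).filter (fun S => ∀ a ∈ S, G.Adj b a)).card := by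
        simp only [key]
    _ = ∑ b ∈ B, ∑ S ∈ A.powersetCard m, (if ∀ a ∈ S, G.Adj b a then 1 else 0) := by
        simp only [card_filter]
    _ = ∑ S ∈ A.powersetCard m, ∑ b ∈ B, (if ∀ a ∈ S, G.Adj b a then 1 else 0) :=
        Finset.sum_comm
    _ = ∑ S ∈ A.powersetCard m, (B.filter (fun b => ∀ a ∈ S, G.Adj b a)).card := by
        simp only [card_filter]

lemma pow_sub_le_descFactorial (d m : ℕ) : (d - m) ^ m ≤ d.descFactorial m := by
  calc (d - m) ^ m = ∏ _i ∈ range m, (d - m) := by rw [prod_const, card_range]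
    _ ≤ ∏ i ∈ range m, (d - i) :=
        Finset.prod_le_prod' (fun i hi => Nat.sub_le_sub_left (le_of_lt (mem_range.1 hi)) d)
    _ = d.descFactorial m := (Nat.descFactorial_eq_prod_range d m).symm

lemma nat_pow_sum_le {ι : Type*} (s : Finset ι) (f : ι → ℕ) (m : ℕ) (hm : 1 ≤ m) :
    (∑ i ∈ s, f i) ^ m ≤ s.card ^ (m - 1) * ∑ i ∈ s, (f i) ^ m := by
  obtain ⟨p, rfl⟩ : ∃ p, m = p + 1 := ⟨m - 1, by omega⟩
  rw [Nat.add_sub_cancel]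
  have h := pow_sum_le_card_mul_sum_pow (s := s) (f := fun i => (f i : ℝ))
    (fun i _ => by positivity) p
  exact_mod_cast h

/-- Core counting lemma: if the "degree sum" of `B` into `A` is large, some `m`-subset
of `A` has more than `r` common `G`-neighbours in `B`. -/
theorem exists_common_nbhd (G : SimpleGraph (Fin n)) (A B : Finset (Fin n)) (m r : ℕ)
    (hm : 1 ≤ m)
    (hsum : (m : ℝ) * B.card ≤ ∑ b ∈ B, ((adjIn G A b).card : ℝ))
    (hcount : (B.card : ℝ) ^ (m - 1) * ((A.card : ℝ) ^ m * r) <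
      ((∑ b ∈ B, ((adjIn G A b).card : ℝ)) - m * B.card) ^ m) :
    ∃ S, S ⊆ A ∧ S.card = m ∧ r < (comN G B S).card := by
  unfold adjIn at hsum hcount
  unfold comN
  by_contra hcon
  push_neg at hcon
  set d : Fin n → ℕ := fun b => (A.filter (fun a => G.Adj b a)).card with hd
  have h1 : ∑ S ∈ A.powersetCard m, (B.filter (fun b => ∀ a ∈ S, G.Adj b a)).card
      ≤ A.card.choose m * r := by
    calc ∑ S ∈ A.powersetCard m, (B.filter (fun b => ∀ a ∈ S, G.Adj b a)).card
        ≤ ∑ _S ∈ A.powersetCard m, r := by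
          refine Finset.sum_le_sum (fun S hS => ?_)
          obtain ⟨hsub, hcard⟩ := mem_powersetCard.1 hS
          exact hcon S hsub hcard
      _ = A.card.choose m * r := by rw [Finset.sum_const, card_powersetCard, smul_eq_mul]
  have h2 : ∑ b ∈ B, (d b).choose m ≤ A.card.choose m * r := by
    rw [hd]; rw [sum_choose_eq]; exact h1
  have h3 : ∑ b ∈ B, (d b - m) ^ m ≤ A.card ^ m * r := by
    calc ∑ b ∈ B, (d b - m) ^ m
        ≤ ∑ b ∈ B, (d b).descFactorial m :=
          Finset.sum_le_sum (fun b _ => pow_sub_le_descFactorial _ _)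
      _ = ∑ b ∈ B, m.factorial * (d b).choose m := by
          simp only [Nat.descFactorial_eq_factorial_mul_choose]
      _ = m.factorial * ∑ b ∈ B, (d b).choose m := by rw [mul_sum]
      _ ≤ m.factorial * (A.card.choose m * r) := Nat.mul_le_mul_left _ h2
      _ = (m.factorial * A.card.choose m) * r := by ring
      _ = A.card.descFactorial m * r := by rw [← Nat.descFactorial_eq_factorial_mul_choose]
      _ ≤ A.card ^ m * r := Nat.mul_le_mul_right _ (Nat.descFactorial_le_pow _ _)
  have h4 : (∑ b ∈ B, (d b - m)) ^ m ≤ B.card ^ (m - 1) * (A.card ^ m * r) :=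
    le_trans (nat_pow_sum_le B _ m hm) (Nat.mul_le_mul_left _ h3)
  have h5 : (∑ b ∈ B, d b) - m * B.card ≤ ∑ b ∈ B, (d b - m) := by
    have : ∑ b ∈ B, d b ≤ m * B.card + ∑ b ∈ B, (d b - m) := by
      calc ∑ b ∈ B, d b ≤ ∑ b ∈ B, (m + (d b - m)) :=
            Finset.sum_le_sum (fun b _ => by omega)
        _ = m * B.card + ∑ b ∈ B, (d b - m) := by
            rw [Finset.sum_add_distrib, Finset.sum_const, smul_eq_mul, mul_comm]
    omega
  have hs_nat : m * B.card ≤ ∑ b ∈ B, d b := by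
    have h : ((m * B.card : ℕ) : ℝ) ≤ ((∑ b ∈ B, d b : ℕ) : ℝ) := by push_cast; exact hsum
    exact_mod_cast h
  have h6 : ((∑ b ∈ B, d b) - m * B.card) ^ m ≤ B.card ^ (m - 1) * (A.card ^ m * r) :=
    le_trans (Nat.pow_le_pow_left h5 m) h4
  have hre : ((∑ b ∈ B, ((A.filter (fun a => G.Adj b a)).card : ℝ)) - m * B.card)
      = (((∑ b ∈ B, d b) - m * B.card : ℕ) : ℝ) := by
    rw [Nat.cast_sub hs_nat]
    push_cast [hd]
    ring
  rw [hre] at hcount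
  have h6' : ((((∑ b ∈ B, d b) - m * B.card : ℕ) : ℝ)) ^ m
      ≤ ((B.card ^ (m - 1) * (A.card ^ m * r) : ℕ) : ℝ) := by exact_mod_cast h6
  push_cast at h6'
  linarith

/-! ### Pattern-building lemmas -/

theorem common_bound {t : ℕ} {R G : SimpleGraph (Fin n)} (hnp : ¬ ContainsUnavoidable R t)
    {Nt : ℕ} (hNt : RamseyProp t Nt) (hG : G = R ∨ G = Rᶜ)
    (X : Finset (Fin n)) (hX : G.IsClique (X : Set (Fin n))) (hXc : X.card = t) :
    (comN Gᶜ univ X).card < Nt := by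
  by_contra hge
  push_neg at hge
  obtain ⟨Y, hYsub, hYcard, hYmono⟩ := hNt n G _ hge
  apply hnp
  refine ⟨X, Y, ?_, hXc, hYcard, G, hG, hX, hYmono, ?_⟩
  · rw [Finset.disjoint_left]
    intro a haX haY
    exact Gᶜ.irrefl ((mem_comN.1 (hYsub haY)).2 a haX)
  · intro x hx y hy
    exact ((mem_comN.1 (hYsub hy)).2 x hx).symm

/-- A red clique of size `t²` contradicts `blue ≥ red`, pattern-freeness and largeness
of `n`. -/
theorem red_clique_contra (t : ℕ) (ht : 3 ≤ t) (R : SimpleGraph (Fin n))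
    (hnp : ¬ ContainsUnavoidable R t)
    (hdeg : ∑ v : Fin n, (adjIn R univ v).card ≤ ∑ v : Fin n, (adjIn Rᶜ univ v).card)
    (Nt : ℕ) (htN : t ≤ Nt) (hNt : RamseyProp t Nt)
    (Z : Finset (Fin n)) (hZ : R.IsClique (Z : Set (Fin n))) (hZcard : Z.card = t * t)
    (hn1 : 8 * ((t * t + (t * t).choose t * Nt) + Nt + 2) ≤ n)
    (hn2 : 8 ^ Nt * Nt + 1 ≤ n) : False := by
  set s := t * t with hs
  set M := s + s.choose t * Nt with hM
  set HB := univ.filter (fun v => t ≤ (adjIn Rᶜ Z v).card) with hHB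
  have hHBcard : HB.card ≤ s.choose t * Nt := by
    have hsub : HB ⊆ (Z.powersetCard t).biUnion (fun X => comN Rᶜ univ X) := by
      intro v hv
      obtain ⟨X, hXsub, hXcard⟩ := Finset.exists_subset_card_eq (mem_filter.1 hv).2
      refine mem_biUnion.2 ⟨X, ?_, ?_⟩
      · exact mem_powersetCard.2 ⟨hXsub.trans (adjIn_subset _ _ _), hXcard⟩
      · exact mem_comN.2 ⟨mem_univ _, fun x hx => (mem_adjIn.1 (hXsub hx)).2⟩
    calc HB.card ≤ ((Z.powersetCard t).biUnion (fun X => comN Rᶜ univ X)).card :=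
          card_le_card hsub
      _ ≤ ∑ X ∈ Z.powersetCard t, (comN Rᶜ univ X).card := card_biUnion_le
      _ ≤ ∑ _X ∈ Z.powersetCard t, Nt := by
          refine sum_le_sum (fun X hX => ?_)
          obtain ⟨hXsub, hXcard⟩ := mem_powersetCard.1 hX
          exact le_of_lt (common_bound hnp hNt (Or.inl rfl) X
            (hZ.subset (coe_subset.2 hXsub)) hXcard)
      _ = s.choose t * Nt := by rw [sum_const, card_powersetCard, hZcard, smul_eq_mul]
  set W := univ.filter (fun v => v ∉ Z ∧ (adjIn Rᶜ Z v).card < t) with hW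
  set w := W.card with hw
  have hwn : w ≤ n := by
    calc w ≤ (univ : Finset (Fin n)).card := card_le_card (subset_univ _)
      _ = n := by simp
  have hWbig : n ≤ w + M := by
    have hcover : (univ : Finset (Fin n)) ⊆ W ∪ Z ∪ HB := by
      intro v _
      by_cases h1 : v ∈ Z
      · exact mem_union.2 (Or.inl (mem_union.2 (Or.inr h1)))
      by_cases h2 : t ≤ (adjIn Rᶜ Z v).card
      · exact mem_union.2 (Or.inr (mem_filter.2 ⟨mem_univ _, h2⟩))
      · exact mem_union.2 (Or.inl (mem_union.2 (Or.inl
          (mem_filter.2 ⟨mem_univ _, h1, by omega⟩))))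
    have h1 : n ≤ (W ∪ Z ∪ HB).card := by
      calc n = (univ : Finset (Fin n)).card := by simp
        _ ≤ _ := card_le_card hcover
    have h2 : (W ∪ Z).card ≤ W.card + Z.card := card_union_le _ _
    have h3 : (W ∪ Z ∪ HB).card ≤ (W ∪ Z).card + HB.card := card_union_le _ _
    rw [hM]
    omega
  -- no blue K_t inside W
  have hnoblue : ∀ Y', Y' ⊆ W → Y'.card = t → ¬ Rᶜ.IsClique (Y' : Set (Fin n)) := by
    intro Y' hY'sub hY'card hY'cl
    set Z' := comN R Z Y' with hZ'
    have hZ'Zcard : t ≤ Z'.card := by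
      have hsub : Z \ Z' ⊆ Y'.biUnion (fun y => adjIn Rᶜ Z y) := by
        intro z hz
        obtain ⟨hzZ, hz'⟩ := mem_sdiff.1 hz
        rw [hZ', mem_comN] at hz'
        push_neg at hz'
        obtain ⟨y, hy, hnadj⟩ := hz' hzZ
        refine mem_biUnion.2 ⟨y, hy, mem_adjIn.2 ⟨hzZ, ?_⟩⟩
        have hyz : y ≠ z := by
          rintro rfl
          exact (mem_filter.1 (hY'sub hy)).2.1 hzZ
        exact (R.compl_adj y z).2 ⟨hyz, fun h => hnadj h.symm⟩
      have hbd : (Z \ Z').card ≤ t * (t - 1) := by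
        calc (Z \ Z').card ≤ (Y'.biUnion (fun y => adjIn Rᶜ Z y)).card := card_le_card hsub
          _ ≤ ∑ y ∈ Y', (adjIn Rᶜ Z y).card := card_biUnion_le
          _ ≤ ∑ _y ∈ Y', (t - 1) := by
              refine sum_le_sum (fun y hy => ?_)
              have := (mem_filter.1 (hY'sub hy)).2.2
              omega
          _ = t * (t - 1) := by rw [sum_const, hY'card, smul_eq_mul]
      have hZ'subZ : Z' ⊆ Z := comN_subset _ _ _
      have hZsplit : (Z \ Z').card = Z.card - Z'.card := card_sdiff_of_subset hZ'subZ
      have hZ'le : Z'.card ≤ Z.card := card_le_card hZ'subZ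
      have htt : t * (t - 1) + t = t * t := by
        obtain ⟨t', rfl⟩ : ∃ t', t = t' + 1 := ⟨t - 1, by omega⟩
        simp [Nat.succ_sub_one]
        ring
      rw [hZcard] at hZsplit hZ'le
      omega
    obtain ⟨Y, hYsub', hYcard'⟩ := Finset.exists_subset_card_eq hZ'Zcard
    apply hnp
    have hYZ : Y ⊆ Z := hYsub'.trans (comN_subset _ _ _)
    refine ⟨Y', Y, ?_, hY'card, hYcard', Rᶜ, Or.inr rfl, hY'cl, Or.inr ?_, ?_⟩
    · rw [Finset.disjoint_left]
      intro a haY' haY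
      exact (mem_filter.1 (hY'sub haY')).2.1 (hYZ haY)
    · rw [compl_compl]
      exact hZ.subset (coe_subset.2 hYZ)
    · intro x hx y hy
      rw [compl_compl]
      exact ((mem_comN.1 (hYsub' hy)).2 x hx).symm
  -- degree counting within W
  have hpart : ∀ v ∈ W, (adjIn R W v).card + (adjIn Rᶜ W v).card = w - 1 := by
    intro v hv
    have hdisj : Disjoint (adjIn R W v) (adjIn Rᶜ W v) := by
      rw [Finset.disjoint_left]
      intro a ha hb
      exact ((R.compl_adj v a).1 (mem_adjIn.1 hb).2).2 (mem_adjIn.1 ha).2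
    have hunion : (adjIn R W v) ∪ (adjIn Rᶜ W v) = W.erase v := by
      ext u
      simp only [mem_union, mem_adjIn, mem_erase, SimpleGraph.compl_adj]
      constructor
      · rintro (⟨hu, ha⟩ | ⟨hu, hne, _⟩)
        · exact ⟨fun h => (h ▸ ha).ne rfl, hu⟩
        · exact ⟨hne.symm, hu⟩
      · rintro ⟨hne, hu⟩
        by_cases hadj : R.Adj v u
        · exact Or.inl ⟨hu, hadj⟩
        · exact Or.inr ⟨hu, hne.symm, hadj⟩
    have hcu := card_union_of_disjoint hdisj
    rw [hunion, card_erase_of_mem hv] at hcu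
    omega
  have hsumpart : (∑ v ∈ W, (adjIn R W v).card) + (∑ v ∈ W, (adjIn Rᶜ W v).card)
      = w * (w - 1) := by
    rw [← Finset.sum_add_distrib]
    rw [Finset.sum_congr rfl hpart, sum_const, smul_eq_mul]
  have hred : ∑ v ∈ W, (adjIn R W v).card ≤ ∑ v : Fin n, (adjIn R univ v).card := by
    refine le_trans (sum_le_sum (fun v _ => card_le_card
      (adjIn_mono R (subset_univ W) v))) ?_
    exact sum_le_sum_of_subset (subset_univ W)
  set SB := ∑ v ∈ W, (adjIn Rᶜ W v).card with hSB
  have hblue : ∑ v : Fin n, (adjIn Rᶜ univ v).card ≤ SB + 2 * (M * n) := by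
    have hsplit : ∑ v : Fin n, (adjIn Rᶜ univ v).card
        = ∑ v ∈ univ \ W, (adjIn Rᶜ univ v).card + ∑ v ∈ W, (adjIn Rᶜ univ v).card :=
      (Finset.sum_sdiff (subset_univ W)).symm
    have hWc : (univ \ W).card ≤ M := by
      have : (univ \ W).card = n - w := by
        rw [card_sdiff_of_subset (subset_univ W)]
        simp [hw]
      omega
    have hb1 : ∑ v ∈ univ \ W, (adjIn Rᶜ univ v).card ≤ M * n := by
      calc ∑ v ∈ univ \ W, (adjIn Rᶜ univ v).card
          ≤ ∑ _v ∈ univ \ W, n := by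
            refine sum_le_sum (fun v _ => ?_)
            calc (adjIn Rᶜ univ v).card ≤ (univ : Finset (Fin n)).card :=
                  card_le_card (adjIn_subset _ _ _)
              _ = n := by simp
        _ = (univ \ W).card * n := by rw [sum_const, smul_eq_mul]
        _ ≤ M * n := Nat.mul_le_mul_right n hWc
    have hb2 : ∑ v ∈ W, (adjIn Rᶜ univ v).card ≤ SB + M * n := by
      have hptw : ∀ v ∈ W, (adjIn Rᶜ univ v).card ≤ (adjIn Rᶜ W v).card + M := by
        intro v _
        have hsub2 : adjIn Rᶜ univ v ⊆ (adjIn Rᶜ W v) ∪ (univ \ W) := by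
          intro u hu
          by_cases huW : u ∈ W
          · exact mem_union.2 (Or.inl (mem_adjIn.2 ⟨huW, (mem_adjIn.1 hu).2⟩))
          · exact mem_union.2 (Or.inr (mem_sdiff.2 ⟨mem_univ _, huW⟩))
        calc (adjIn Rᶜ univ v).card ≤ ((adjIn Rᶜ W v) ∪ (univ \ W)).card :=
              card_le_card hsub2
          _ ≤ (adjIn Rᶜ W v).card + (univ \ W).card := card_union_le _ _
          _ ≤ (adjIn Rᶜ W v).card + M := by omega
      calc ∑ v ∈ W, (adjIn Rᶜ univ v).card
          ≤ ∑ v ∈ W, ((adjIn Rᶜ W v).card + M) := sum_le_sum hptw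
        _ = SB + w * M := by rw [Finset.sum_add_distrib, sum_const, smul_eq_mul]
        _ ≤ SB + M * n := by
            have : w * M ≤ M * n := by rw [mul_comm]; exact Nat.mul_le_mul_left M hwn
            omega
    omega
  have hSBlow : w * (w - 1) ≤ 2 * SB + 2 * (M * n) := by
    have := le_trans hred (le_trans hdeg hblue)
    omega
  set m := Nt with hm
  have hm1 : 1 ≤ m := by omega
  have hww : w * w ≤ 2 * SB + 2 * (M * n) + w := by
    have hgen : ∀ a : ℕ, a * (a - 1) + a = a * a := by
      intro a
      cases a with
      | zero => simp
      | succ k => simp [Nat.succ_sub_one]; ring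
    have := hgen w
    omega
  have hnR : (0:ℝ) < n := by
    have : 0 < n := by omega
    exact_mod_cast this
  have hX8 : ((n:ℝ))^2 / 8 ≤ (SB : ℝ) - m * w := by
    have hwwR : (w:ℝ) * w ≤ 2 * SB + 2 * ((M:ℝ) * n) + w := by exact_mod_cast hww
    have hwnR : (w:ℝ) ≤ n := by exact_mod_cast hwn
    have hWbigR : (n:ℝ) ≤ w + M := by exact_mod_cast hWbig
    have hn1R : 8 * ((M:ℝ) + m + 2) ≤ n := by
      have : 8 * (M + m + 2) ≤ n := by rw [hM, hm]; exact hn1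
      exact_mod_cast this
    nlinarith [sq_nonneg ((n:ℝ) - w), sq_nonneg ((w:ℝ) - M), hnR]
  have hXpos : (0:ℝ) ≤ (SB : ℝ) - m * w := le_trans (by positivity) hX8
  have hSBsum : ((SB : ℕ) : ℝ) = ∑ b ∈ W, ((adjIn Rᶜ W b).card : ℝ) := by
    rw [hSB]; push_cast; rfl
  obtain ⟨S0, hS0sub, hS0card, hS0nb⟩ := exists_common_nbhd Rᶜ W W m (m - 1) hm1
    (by rw [← hSBsum, ← hw]; linarith)
    (by
      rw [← hSBsum, ← hw]
      have hwnR : (w:ℝ) ≤ n := by exact_mod_cast hwn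
      have hw0 : (0:ℝ) ≤ w := by positivity
      have hrm : ((m - 1 : ℕ) : ℝ) ≤ (m : ℝ) := by
        have : (m - 1 : ℕ) ≤ m := by omega
        exact_mod_cast this
      have step1 : ((w:ℝ))^(m-1) * ((w:ℝ)^m * ((m-1:ℕ):ℝ))
          ≤ ((n:ℝ))^(m-1) * ((n:ℝ)^m * (m:ℝ)) := by
        have h1 : ((w:ℝ))^(m-1) ≤ ((n:ℝ))^(m-1) := pow_le_pow_left₀ hw0 hwnR _
        have h2 : ((w:ℝ))^m ≤ ((n:ℝ))^m := pow_le_pow_left₀ hw0 hwnR _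
        have hm0 : (0:ℝ) ≤ ((m-1:ℕ):ℝ) := by positivity
        have h3 := mul_le_mul h2 hrm hm0 (by positivity)
        exact mul_le_mul h1 h3 (by positivity) (by positivity)
      have step2 : ((n:ℝ))^(m-1) * ((n:ℝ)^m * (m:ℝ)) < ((n:ℝ)^2/8)^m := by
        have hexp : ((n:ℝ)^2/8)^m = (n:ℝ)^(m-1) * ((n:ℝ)^m * ((n:ℝ)/8^m)) := by
          rw [div_pow, ← pow_mul]
          have h2m : 2 * m = (m - 1) + m + 1 := by omega
          rw [h2m, pow_add, pow_add, pow_one]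
          ring
        rw [hexp]
        have hlt : (m:ℝ) < (n:ℝ)/8^m := by
          rw [lt_div_iff₀ (by positivity)]
          have : (8:ℝ)^m * m + 1 ≤ n := by exact_mod_cast hn2
          nlinarith
        have hpos : (0:ℝ) < (n:ℝ)^(m-1) * (n:ℝ)^m := by positivity
        calc ((n:ℝ))^(m-1) * ((n:ℝ)^m * (m:ℝ)) = ((n:ℝ)^(m-1) * (n:ℝ)^m) * m := by ring
          _ < ((n:ℝ)^(m-1) * (n:ℝ)^m) * ((n:ℝ)/8^m) := mul_lt_mul_of_pos_left hlt hpos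
          _ = (n:ℝ)^(m-1) * ((n:ℝ)^m * ((n:ℝ)/8^m)) := by ring
      have step3 : ((n:ℝ)^2/8)^m ≤ ((SB:ℝ) - m * w)^m :=
        pow_le_pow_left₀ (by positivity) hX8 m
      calc ((w:ℝ))^(m-1) * ((w:ℝ)^m * ((m-1:ℕ):ℝ)) ≤ _ := step1
        _ < _ := step2
        _ ≤ _ := step3)
  set CN := comN Rᶜ W S0 with hCN
  have hCNm : m ≤ CN.card := by omega
  obtain ⟨T0, hT0sub, hT0card⟩ := Finset.exists_subset_card_eq hCNm
  obtain ⟨Y1, hY1sub, hY1card, hY1mono⟩ := hNt n R S0 (le_of_eq hS0card.symm)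
  have hY1red : R.IsClique (Y1 : Set (Fin n)) := by
    rcases hY1mono with h | h
    · exact h
    · exact absurd h (hnoblue Y1 (hY1sub.trans hS0sub) hY1card)
  obtain ⟨Y2, hY2sub, hY2card, hY2mono⟩ := hNt n R T0 (le_of_eq hT0card.symm)
  have hT0W : T0 ⊆ W := hT0sub.trans (comN_subset _ _ _)
  have hY2red : R.IsClique (Y2 : Set (Fin n)) := by
    rcases hY2mono with h | h
    · exact h
    · exact absurd h (hnoblue Y2 (hY2sub.trans hT0W) hY2card)
  apply hnp
  refine ⟨Y1, Y2, ?_, hY1card, hY2card, R, Or.inl rfl, hY1red, Or.inl hY2red, ?_⟩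
  · rw [Finset.disjoint_left]
    intro a haY1 haY2
    exact Rᶜ.irrefl ((mem_comN.1 (hT0sub (hY2sub haY2))).2 a (hY1sub haY1))
  · intro x hx y hy
    exact ((mem_comN.1 (hT0sub (hY2sub hy))).2 x (hY1sub hx)).symm

end Stmt8

open Stmt8 in
/-- **Claim.** For `t ≥ 3` and `ε > 0` there is `C₁ = C₁(t, ε)` such that: if `K_n` is
red/blue coloured with at least as many blue edges as red ones and with no unavoidable
`t`-colouring, then some set `S` of at most `C₁` vertices can be removed so that in the
remaining complete graph on `n' = n - |S|` vertices every vertex is incident to at least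
`(1 - 2ε)n'` blue edges. -/
theorem statement8 (t : ℕ) (ht : 3 ≤ t) (ε : ℝ) (hε : 0 < ε) :
    ∃ C₁ : ℝ, ∀ (n : ℕ) (R : SimpleGraph (Fin n)),
      R.edgeSet.ncard ≤ Rᶜ.edgeSet.ncard →
      ¬ ContainsUnavoidable R t →
      ∃ S : Finset (Fin n), (S.card : ℝ) ≤ C₁ ∧
        ∀ v : Fin n, v ∉ S →
          (1 - 2 * ε) * ((n - S.card : ℕ) : ℝ) ≤
            (({u : Fin n | u ∉ S ∧ Rᶜ.Adj v u}).ncard : ℝ) := by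
  obtain ⟨Nt, htN, hNt⟩ := ramsey_exists t
  obtain ⟨Ns, hsNs, hNs⟩ := ramsey_exists (t * t)
  set K := ⌈(2 * Nt : ℝ) / ε⌉₊ + 1 with hK
  set nbig := 8 * ((t * t + (t * t).choose t * Nt) + Nt + 2) + (8 ^ Nt * Nt + 1)
      + (⌈(Ns : ℝ) * (2 / ε) ^ Nt⌉₊ + 1) + (2 * K + ⌈1 / ε⌉₊ + 2) with hnbig
  refine ⟨((nbig + K : ℕ) : ℝ), ?_⟩
  intro n R hedge hnp
  by_cases hsmall : n < nbig
  · refine ⟨Finset.univ, ?_, ?_⟩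
    · have h1 : (Finset.univ : Finset (Fin n)).card = n := by simp
      rw [h1]
      have : n ≤ nbig + K := by omega
      exact_mod_cast this
    · intro v hv
      exact absurd (Finset.mem_univ v) hv
  push_neg at hsmall
  -- threshold components
  have hn1 : 8 * ((t * t + (t * t).choose t * Nt) + Nt + 2) ≤ n := by omega
  have hn2 : 8 ^ Nt * Nt + 1 ≤ n := by omega
  have hn3 : ⌈(Ns : ℝ) * (2 / ε) ^ Nt⌉₊ + 1 ≤ n := by omega
  have hn4 : 2 * K + ⌈1 / ε⌉₊ + 2 ≤ n := by omega
  -- degree-sum form of the edge hypothesis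
  have hdeg : ∑ v : Fin n, (adjIn R Finset.univ v).card
      ≤ ∑ v : Fin n, (adjIn Rᶜ Finset.univ v).card := by
    have key : ∀ (G : SimpleGraph (Fin n)), ∑ v : Fin n, (adjIn G Finset.univ v).card
        = 2 * G.edgeFinset.card := by
      intro G
      rw [← SimpleGraph.sum_degrees_eq_twice_card_edges]
      refine Finset.sum_congr rfl (fun v _ => ?_)
      have h1 : adjIn G Finset.univ v = G.neighborFinset v := by
        ext u
        rw [mem_adjIn, SimpleGraph.mem_neighborFinset]
        simp
      rw [h1, SimpleGraph.card_neighborFinset_eq_degree]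
    have hcard : ∀ (G : SimpleGraph (Fin n)), G.edgeSet.ncard = G.edgeFinset.card := by
      intro G
      rw [← SimpleGraph.coe_edgeFinset, Set.ncard_coe_finset]
    rw [key R, key Rᶜ]
    rw [hcard R, hcard Rᶜ] at hedge
    omega
  -- the set of high red-degree vertices
  set D := Finset.univ.filter
      (fun v : Fin n => ε * n ≤ ((adjIn R Finset.univ v).card : ℝ)) with hD
  have hKe : 2 * (Nt : ℝ) ≤ K * ε := by
    have h1 : (2 * Nt : ℝ) / ε ≤ (K : ℝ) := by
      rw [hK]
      push_cast
      have := Nat.le_ceil ((2 * Nt : ℝ) / ε)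
      linarith
    calc 2 * (Nt : ℝ) = ((2 * Nt : ℝ) / ε) * ε := by field_simp
      _ ≤ (K : ℝ) * ε := by
          exact mul_le_mul_of_nonneg_right h1 hε.le
  have hDcard : D.card < K := by
    by_contra hDK
    push_neg at hDK
    obtain ⟨D', hD'sub, hD'card⟩ := Finset.exists_subset_card_eq hDK
    -- the degree sum of univ into D'
    have hswap : ∑ b ∈ Finset.univ, (adjIn R D' b).card
        = ∑ a ∈ D', (adjIn R Finset.univ a).card := by
      calc ∑ b ∈ (Finset.univ : Finset (Fin n)), (adjIn R D' b).card
          = ∑ b ∈ Finset.univ, ∑ a ∈ D', (if R.Adj b a then 1 else 0) := by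
            refine Finset.sum_congr rfl (fun b _ => ?_)
            unfold adjIn
            exact Finset.card_filter _ _
        _ = ∑ a ∈ D', ∑ b ∈ Finset.univ, (if R.Adj b a then 1 else 0) := Finset.sum_comm
        _ = ∑ a ∈ D', (Finset.univ.filter (fun b => R.Adj b a)).card := by
            refine Finset.sum_congr rfl (fun a _ => ?_)
            exact (Finset.card_filter _ _).symm
        _ = ∑ a ∈ D', (adjIn R Finset.univ a).card := by
            refine Finset.sum_congr rfl (fun a _ => ?_)
            unfold adjIn
            exact congrArg Finset.card
              (Finset.filter_congr (fun x _ => by rw [SimpleGraph.adj_comm]))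
    have hlow : (K : ℝ) * (ε * n) ≤ ∑ b ∈ Finset.univ, ((adjIn R D' b).card : ℝ) := by
      have h1 : ∑ b ∈ Finset.univ, ((adjIn R D' b).card : ℝ)
          = ∑ a ∈ D', ((adjIn R Finset.univ a).card : ℝ) := by
        have := hswap
        push_cast
        exact_mod_cast congrArg (fun x : ℕ => (x : ℝ)) this
      rw [h1]
      calc (K : ℝ) * (ε * n) = ∑ _a ∈ D', (ε * n) := by
            rw [Finset.sum_const, hD'card, nsmul_eq_mul]
        _ ≤ ∑ a ∈ D', ((adjIn R Finset.univ a).card : ℝ) := by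
            refine Finset.sum_le_sum (fun a ha => ?_)
            exact (Finset.mem_filter.1 (hD'sub ha)).2
    have hNtn : (Nt : ℝ) * ((Finset.univ : Finset (Fin n)).card)
        ≤ ∑ b ∈ Finset.univ, ((adjIn R D' b).card : ℝ) := by
      have hcardu : ((Finset.univ : Finset (Fin n)).card : ℝ) = n := by simp
      rw [hcardu]
      have hnn : (0:ℝ) ≤ n := by positivity
      nlinarith
    obtain ⟨T', hT'sub, hT'card, hT'nb⟩ := exists_common_nbhd R D' Finset.univ Nt Ns
      (by omega) hNtn
      (by
        have hcardu : ((Finset.univ : Finset (Fin n)).card : ℝ) = n := by simp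
        rw [hcardu, hD'card]
        -- goal : n^(Nt-1) * (K^Nt * Ns) < (Σ - Nt * n)^Nt
        have hnn : (0:ℝ) < n := by
          have : 0 < n := by omega
          exact_mod_cast this
        have hKn : (0:ℝ) < K := by
          have : 0 < K := by omega
          exact_mod_cast this
        have hstep : (K * (ε/2)) * (n:ℝ) ≤ (∑ b ∈ Finset.univ, ((adjIn R D' b).card : ℝ))
            - Nt * n := by
          have : (Nt:ℝ) * n ≤ (K * (ε/2)) * n := by
            have : (Nt : ℝ) ≤ K * (ε/2) := by linarith
            exact mul_le_mul_of_nonneg_right this hnn.le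
          nlinarith [hlow]
        have hNslt : (Ns : ℝ) < (ε/2)^Nt * n := by
          have hc := Nat.le_ceil ((Ns : ℝ) * (2 / ε) ^ Nt)
          have hcn : (⌈(Ns : ℝ) * (2 / ε) ^ Nt⌉₊ : ℝ) + 1 ≤ n := by exact_mod_cast hn3
          have h2e : (0:ℝ) < (2/ε)^Nt := by positivity
          have he2 : (0:ℝ) < (ε/2)^Nt := by positivity
          have hprod : (ε/2)^Nt * (2/ε)^Nt = 1 := by
            rw [← mul_pow]
            have : (ε/2) * (2/ε) = 1 := by field_simp
            rw [this, one_pow]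
          have h1 : (Ns : ℝ) * (2 / ε) ^ Nt < n := by linarith
          calc (Ns : ℝ) = (Ns : ℝ) * ((2/ε)^Nt * (ε/2)^Nt) := by
                rw [show ((2:ℝ)/ε)^Nt * (ε/2)^Nt = 1 from by rw [mul_comm]; exact hprod,
                  mul_one]
            _ = ((Ns : ℝ) * (2/ε)^Nt) * (ε/2)^Nt := by ring
            _ < (n : ℝ) * (ε/2)^Nt := by
                exact mul_lt_mul_of_pos_right h1 he2
            _ = (ε/2)^Nt * n := by ring
        have hfinal : (n:ℝ)^(Nt-1) * ((K:ℝ)^Nt * Ns) < ((K * (ε/2)) * (n:ℝ))^Nt := by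
          have hpowsplit : (n:ℝ)^Nt = (n:ℝ)^(Nt-1) * n := by
            obtain ⟨p, hp⟩ : ∃ p, Nt = p + 1 := ⟨Nt - 1, by omega⟩
            rw [hp, Nat.add_sub_cancel, pow_succ]
          have hexp : ((K * (ε/2)) * (n:ℝ))^Nt
              = (K:ℝ)^Nt * ((ε/2)^Nt * ((n:ℝ)^(Nt-1) * n)) := by
            rw [mul_pow, mul_pow, hpowsplit]
            ring
          rw [hexp]
          have hlhs : (n:ℝ)^(Nt-1) * ((K:ℝ)^Nt * Ns)
              = (K:ℝ)^Nt * ((n:ℝ)^(Nt-1) * Ns) := by ring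
          rw [hlhs]
          have hKpow : (0:ℝ) < (K:ℝ)^Nt := by positivity
          refine mul_lt_mul_of_pos_left ?_ hKpow
          have hnpow : (0:ℝ) < (n:ℝ)^(Nt-1) := by positivity
          calc (n:ℝ)^(Nt-1) * Ns < (n:ℝ)^(Nt-1) * ((ε/2)^Nt * n) :=
                mul_lt_mul_of_pos_left hNslt hnpow
            _ = (ε/2)^Nt * ((n:ℝ)^(Nt-1) * n) := by ring
        calc (n:ℝ)^(Nt-1) * ((K:ℝ)^Nt * Ns) < ((K * (ε/2)) * (n:ℝ))^Nt := hfinal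
          _ ≤ ((∑ b ∈ Finset.univ, ((adjIn R D' b).card : ℝ)) - Nt * n)^Nt := by
              refine pow_le_pow_left₀ ?_ hstep _
              positivity)
    -- U = common red neighbourhood of T'
    set U := comN R Finset.univ T' with hU
    have hUNs : Ns ≤ U.card := le_of_lt hT'nb
    by_cases hblueU : ∃ Yb, Yb ⊆ U ∧ Yb.card = t ∧ Rᶜ.IsClique (Yb : Set (Fin n))
    · obtain ⟨Yb, hYbU, hYbcard, hYbcl⟩ := hblueU
      obtain ⟨X', hX'sub, hX'card, hX'mono⟩ := hNt n R T' (le_of_eq hT'card.symm)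
      apply hnp
      refine ⟨Yb, X', ?_, hYbcard, hX'card, Rᶜ, Or.inr rfl, hYbcl, ?_, ?_⟩
      · rw [Finset.disjoint_left]
        intro a haYb haX'
        exact R.irrefl ((mem_comN.1 (hYbU haYb)).2 a (hX'sub haX'))
      · rcases hX'mono with h | h
        · exact Or.inr (by rw [compl_compl]; exact h)
        · exact Or.inl h
      · intro x hx y hy
        rw [compl_compl]
        exact (mem_comN.1 (hYbU hx)).2 y (hX'sub hy)
    · obtain ⟨Zs, hZsub, hZcard, hZmono⟩ := hNs n R U hUNs
      rcases hZmono with hredZ | hblueZ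
      · exact red_clique_contra t ht R hnp hdeg Nt htN hNt Zs hredZ hZcard hn1 hn2
      · have httle : t ≤ t * t := Nat.le_mul_of_pos_left t (by omega)
        obtain ⟨Yb, hYbsub, hYbcard⟩ := Finset.exists_subset_card_eq
          (le_trans httle (le_of_eq hZcard.symm))
        exact hblueU ⟨Yb, hYbsub.trans hZsub, hYbcard,
          hblueZ.subset (Finset.coe_subset.2 hYbsub)⟩
  -- conclude with S = D
  have hDn : D.card ≤ n := by
    calc D.card ≤ (Finset.univ : Finset (Fin n)).card := Finset.card_le_card (Finset.subset_univ _)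
      _ = n := by simp
  refine ⟨D, ?_, ?_⟩
  · have : D.card ≤ nbig + K := by omega
    exact_mod_cast this
  · intro v hvD
    have hvdeg : ((adjIn R Finset.univ v).card : ℝ) < ε * n := by
      by_contra hge
      push_neg at hge
      exact hvD (Finset.mem_filter.2 ⟨Finset.mem_univ _, hge⟩)
    set F := Finset.univ.filter (fun u : Fin n => u ∉ D ∧ Rᶜ.Adj v u) with hF
    have hset : {u : Fin n | u ∉ D ∧ Rᶜ.Adj v u} = (F : Set (Fin n)) := by
      ext u
      simp [hF]
    rw [hset, Set.ncard_coe_finset]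
    -- lower bound on F.card
    have hsubF : (Finset.univ \ D) \ (insert v (adjIn R Finset.univ v)) ⊆ F := by
      intro u hu
      obtain ⟨hu1, hu2⟩ := Finset.mem_sdiff.1 hu
      have huD : u ∉ D := (Finset.mem_sdiff.1 hu1).2
      have huv : u ≠ v := fun h => hu2 (h ▸ Finset.mem_insert_self _ _)
      have huA : ¬ R.Adj v u := fun h =>
        hu2 (Finset.mem_insert_of_mem (mem_adjIn.2 ⟨Finset.mem_univ _, h⟩))
      exact Finset.mem_filter.2 ⟨Finset.mem_univ _,
        huD, (R.compl_adj v u).2 ⟨huv.symm, huA⟩⟩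
    have hc1 : (Finset.univ \ D).card = n - D.card := by
      rw [Finset.card_sdiff_of_subset (Finset.subset_univ _)]
      simp
    have hc2 : (insert v (adjIn R Finset.univ v)).card ≤ 1 + (adjIn R Finset.univ v).card := by
      have := Finset.card_insert_le v (adjIn R Finset.univ v)
      omega
    have hc3 : (n - D.card) - (1 + (adjIn R Finset.univ v).card) ≤ F.card := by
      have h1 := Finset.le_card_sdiff (insert v (adjIn R Finset.univ v)) (Finset.univ \ D)
      have h2 := Finset.card_le_card hsubF
      omega
    -- now the real-number computation
    have hc3R : ((n : ℝ) - D.card) - (1 + ((adjIn R Finset.univ v).card : ℝ)) ≤ (F.card : ℝ) := by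
      have h4 : n - D.card ≤ F.card + (1 + (adjIn R Finset.univ v).card) := by omega
      have h5 : ((n - D.card : ℕ) : ℝ) = (n : ℝ) - D.card := by
        rw [Nat.cast_sub hDn]
      have h6 : ((n - D.card : ℕ) : ℝ) ≤ (F.card : ℝ) + (1 + ((adjIn R Finset.univ v).card : ℝ))
          := by exact_mod_cast h4
      linarith
    have hcastn' : ((n - D.card : ℕ) : ℝ) = (n : ℝ) - D.card := by
      rw [Nat.cast_sub hDn]
    rw [hcastn']
    have hDK : (D.card : ℝ) ≤ K := by
      have : D.card ≤ K := le_of_lt hDcard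
      exact_mod_cast this
    have hnN : (2 * K + ⌈1 / ε⌉₊ + 2 : ℝ) ≤ n := by exact_mod_cast hn4
    have hceil : (1 / ε : ℝ) ≤ (⌈1 / ε⌉₊ : ℝ) := Nat.le_ceil _
    have heps1 : ε * (1/ε) = 1 := by field_simp
    have p3 : 1 ≤ ε * (⌈1/ε⌉₊ : ℝ) := by
      have h := mul_le_mul_of_nonneg_left hceil hε.le
      rwa [heps1] at h
    linarith [hc3R, hvdeg, mul_le_mul_of_nonneg_left hnN hε.le,
      mul_le_mul_of_nonneg_left hDK hε.le, p3]
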